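/- Let L be a finite-dimensional subspace of the field of rational functions C(X₁,…,X_m), and let val be the valuation assigning to each nonzero Laurent polynomial the exponent vector of its lexicographically minimal monomial (extended to rational functions by val(f/g) = val(f) − val(g)). Then the image val(L \ {0}) ⊂ Z^m has cardinality exactly dim L. (The valuation has one-dimensional leaves.) -/

import Mathlib

/-- Lexicographic order on exponent vectors `Fin m → ℤ` (with respect to the
order of the variables `X₁, …, X_m`). -/
def lexLE (m : ℕ) (v u : Fin m → ℤ) : Prop :=
  v = u ∨ ∃ i : Fin m, (∀ j : Fin m, j < i → v j = u j) ∧ v i < u i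

set_option maxHeartbeats 1000000 in
set_option synthInstance.maxHeartbeats 200000 in
lemma gen_aux {K σ : Type*} [Field K] [LinearOrder σ] (n : ℕ) :
    ∀ (L : Submodule K (AddMonoidAlgebra K σ)), FiniteDimensional K L → Module.finrank K L = n →
    Set.ncard {a : σ | ∃ f ∈ L, f ≠ 0 ∧ a ∈ f.coeff.support ∧ ∀ b ∈ f.coeff.support, a ≤ b} = n := by
  induction n with
  | zero =>
    intro L hFD hrk
    haveI := hFD
    have hbot : L = ⊥ := Submodule.finrank_eq_zero.mp hrk
    have : {a : σ | ∃ f ∈ L, f ≠ 0 ∧ a ∈ f.coeff.support ∧ ∀ b ∈ f.coeff.support, a ≤ b} = ∅ := by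
      ext a
      simp only [Set.mem_setOf_eq, Set.mem_empty_iff_false, iff_false]
      rintro ⟨f, hfL, hf0, -⟩
      rw [hbot, Submodule.mem_bot] at hfL
      exact hf0 hfL
    rw [this, Set.ncard_empty]
  | succ n ih =>
    intro L hFD hrk
    haveI := hFD
    set S := {a : σ | ∃ f ∈ L, f ≠ 0 ∧ a ∈ f.coeff.support ∧ ∀ b ∈ f.coeff.support, a ≤ b} with hSdef
    -- S is finite
    obtain ⟨s, hs⟩ : L.FG := Module.Finite.iff_fg.mp inferInstance
    set T : Finset σ := s.sup (fun f => f.coeff.support) with hT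
    have hsupp : ∀ g ∈ L, g.coeff.support ⊆ T := by
      have hle : L ≤ AddMonoidAlgebra.supported K K (↑T : Set σ) := by
        rw [← hs]
        apply Submodule.span_le.mpr
        intro x hx
        rw [SetLike.mem_coe, AddMonoidAlgebra.mem_supported]
        exact_mod_cast Finset.le_sup (f := fun f => f.coeff.support) hx
      intro g hg
      have := hle hg
      rw [AddMonoidAlgebra.mem_supported] at this
      exact_mod_cast this
    have hSsub : S ⊆ ↑T := by
      rintro a ⟨f, hfL, hf0, hmem, -⟩
      exact hsupp f hfL hmem
    have hfin : S.Finite := Set.Finite.subset T.finite_toSet hSsub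
    -- S is nonempty
    have hLne : L ≠ ⊥ := by
      intro h
      rw [h] at hrk
      simp [finrank_bot] at hrk
    obtain ⟨f₁, hf₁L, hf₁0⟩ := Submodule.ne_bot_iff L |>.mp hLne
    have hne : S.Nonempty := by
      have hns : f₁.coeff.support.Nonempty := Finsupp.support_nonempty_iff.mpr (mt AddMonoidAlgebra.coeff_eq_zero.mp hf₁0)
      exact ⟨f₁.coeff.support.min' hns, f₁, hf₁L, hf₁0, f₁.coeff.support.min'_mem hns,
        fun b hb => f₁.coeff.support.min'_le b hb⟩
    -- minimal element a₀ of S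
    have hne' : hfin.toFinset.Nonempty := by
      rwa [Set.Finite.toFinset_nonempty]
    set a₀ : σ := hfin.toFinset.min' hne' with ha₀
    have ha₀S : a₀ ∈ S := by
      have := hfin.toFinset.min'_mem hne'
      rwa [Set.Finite.mem_toFinset] at this
    have ha₀min : ∀ a ∈ S, a₀ ≤ a := fun a haS =>
      hfin.toFinset.min'_le a (hfin.mem_toFinset.mpr haS)
    obtain ⟨f₀, hf₀L, hf₀0, hf₀mem, -⟩ := id ha₀S
    have hf₀a₀ : f₀.coeff a₀ ≠ 0 := Finsupp.mem_support_iff.mp hf₀mem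
    -- the evaluation map
    set ε : L →ₗ[K] K := ((Finsupp.lapply a₀).comp (AddMonoidAlgebra.coeffLinearEquiv K).toLinearMap).comp L.subtype with hε
    have hsurj : Function.Surjective ε := by
      intro c
      refine ⟨⟨(c * (f₀.coeff a₀)⁻¹) • f₀, L.smul_mem _ hf₀L⟩, ?_⟩
      simp only [hε, LinearMap.comp_apply, Submodule.coe_subtype]
      show ((c * (f₀.coeff a₀)⁻¹) • f₀).coeff a₀ = c
      rw [AddMonoidAlgebra.coeff_smul, Finsupp.smul_apply, smul_eq_mul]
      field_simp
    have hrange : LinearMap.range ε = ⊤ := LinearMap.range_eq_top.mpr hsurj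
    have hker : Module.finrank K (LinearMap.ker ε) = n := by
      have h1 := LinearMap.finrank_range_add_finrank_ker (K := K) (V := ↥L) (V₂ := K) ε
      rw [hrange, finrank_top, Module.finrank_self, hrk] at h1
      omega
    -- the smaller submodule
    set L' : Submodule K (AddMonoidAlgebra K σ) := L ⊓ LinearMap.ker ((Finsupp.lapply a₀ (M := K) (R := K)).comp (AddMonoidAlgebra.coeffLinearEquiv K).toLinearMap)
      with hL'
    have hL'le : L' ≤ L := inf_le_left
    haveI : FiniteDimensional K L' := Submodule.finiteDimensional_of_le hL'le
    have hcomap : Submodule.comap L.subtype L' = LinearMap.ker ε := by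
      rw [hL', Submodule.comap_inf, Submodule.comap_subtype_self, top_inf_eq, hε,
        LinearMap.ker_comp, LinearMap.ker_comp, LinearMap.ker_comp]
    have hrkL' : Module.finrank K L' = n := by
      have e := Submodule.comapSubtypeEquivOfLe hL'le
      rw [← LinearEquiv.finrank_eq (R := K) (M := ↥(Submodule.comap L.subtype L')) (N := ↥L') e, hcomap, hker]
    have hmemL' : ∀ f, f ∈ L' ↔ f ∈ L ∧ f.coeff a₀ = 0 := by
      intro f
      rw [hL', Submodule.mem_inf, LinearMap.mem_ker]
      exact Iff.rfl
    -- relate the two sets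
    have hset : {a : σ | ∃ f ∈ L', f ≠ 0 ∧ a ∈ f.coeff.support ∧ ∀ b ∈ f.coeff.support, a ≤ b}
        = S \ {a₀} := by
      ext a
      simp only [Set.mem_setOf_eq, Set.mem_diff, Set.mem_singleton_iff]
      constructor
      · rintro ⟨f, hfL', hf0, hmem, hmin⟩
        obtain ⟨hfL, hfa₀⟩ := (hmemL' f).mp hfL'
        refine ⟨⟨f, hfL, hf0, hmem, hmin⟩, ?_⟩
        rintro rfl
        exact Finsupp.mem_support_iff.mp hmem hfa₀
      · rintro ⟨⟨f, hfL, hf0, hmem, hmin⟩, hane⟩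
        have haS : a ∈ S := ⟨f, hfL, hf0, hmem, hmin⟩
        have ha₀lt : a₀ < a := lt_of_le_of_ne (ha₀min a haS) (Ne.symm hane)
        have hfa₀ : f.coeff a₀ = 0 := by
          by_contra h
          have := hmin a₀ (Finsupp.mem_support_iff.mpr h)
          exact absurd this (not_le.mpr ha₀lt)
        exact ⟨f, (hmemL' f).mpr ⟨hfL, hfa₀⟩, hf0, hmem, hmin⟩
    have hIH := ih L' inferInstance hrkL'
    rw [hset] at hIH
    have hcard := Set.ncard_diff_singleton_add_one ha₀S hfin
    omega

/-- Let `L` be a finite-dimensional subspace of the Laurent polynomial ring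
`ℂ[X₁^{±1}, …, X_m^{±1}]` (modeled as `AddMonoidAlgebra ℂ (Fin m → ℤ)`), and
let `val f` denote the exponent vector of the lexicographically minimal
monomial of a nonzero `f`.  Then the image `val (L \ {0})` (described here as
the set of lex-minimal support vectors of nonzero elements of `L`) has
cardinality exactly `dim L`: the valuation has one-dimensional leaves. -/
theorem stmt14 (m : ℕ) (L : Submodule ℂ (AddMonoidAlgebra ℂ (Fin m → ℤ)))
    [FiniteDimensional ℂ L] :
    Set.ncard {v : Fin m → ℤ | ∃ f ∈ L, f ≠ 0 ∧ v ∈ f.coeff.support ∧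
        ∀ u ∈ f.coeff.support, lexLE m v u} = Module.finrank ℂ L := by
  letI : LinearOrder (Lex (Fin m → ℤ)) :=
    @Pi.Lex.linearOrder (Fin m) (fun _ => ℤ) _
      (inferInstanceAs (WellFoundedLT (Fin m))) _
  have hlex : ∀ v u : Fin m → ℤ, lexLE m v u ↔ toLex v ≤ toLex u := by
    intro v u
    rw [le_iff_lt_or_eq, lexLE]
    have hlt : (toLex v < toLex u) ↔ ∃ i : Fin m, (∀ j : Fin m, j < i → v j = u j) ∧ v i < u i :=
      Iff.rfl
    change (v = u ∨ _) ↔ (∃ i : Fin m, (∀ j : Fin m, j < i → v j = u j) ∧ v i < u i) ∨ toLex v = toLex u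
    constructor
    · rintro (rfl | h)
      · exact Or.inr rfl
      · exact Or.inl h
    · rintro (h | h)
      · exact Or.inr h
      · exact Or.inl (congrArg ofLex h)
  have key := gen_aux (K := ℂ) (σ := Lex (Fin m → ℤ)) (Module.finrank ℂ L) L ‹_› rfl
  have hset : {v : Fin m → ℤ | ∃ f ∈ L, f ≠ 0 ∧ v ∈ f.coeff.support ∧
        ∀ u ∈ f.coeff.support, lexLE m v u}
      = {a : Lex (Fin m → ℤ) | ∃ f ∈ L, f ≠ 0 ∧ a ∈ Finsupp.support f.coeff ∧
        ∀ b ∈ Finsupp.support f.coeff, a ≤ b} := by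
    ext v
    simp only [Set.mem_setOf_eq]
    constructor
    · rintro ⟨f, hfL, hf0, hv, hmin⟩
      exact ⟨f, hfL, hf0, hv, fun u hu => (hlex v u).mp (hmin u hu)⟩
    · rintro ⟨f, hfL, hf0, hv, hmin⟩
      exact ⟨f, hfL, hf0, hv, fun u hu => (hlex v u).mpr (hmin u hu)⟩
  rw [hset]
  exact key
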